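/- Let V₁, V₂ be finite-dimensional vector spaces, T₁, T₂ nilpotent endomorphisms, T = T₁⊗id + id⊗T₂. If im(T₁) ⊆ ker(T₁) (i.e. T₁² = 0), then dim coker T = τ₁τ₂ + ν₁ν₂, where τᵢ = dim coker Tᵢ and νᵢ = dim(ker Tᵢ ∩ im Tᵢ). -/

import Mathlib

open LinearMap Module TensorProduct

private lemma aux_ker_lTensor (M N : Type*) [AddCommGroup M] [Module ℂ M]
    [FiniteDimensional ℂ M] [AddCommGroup N] [Module ℂ N] [FiniteDimensional ℂ N]
    (f : N →ₗ[ℂ] N) :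
    finrank ℂ (ker (lTensor M f)) = finrank ℂ M * finrank ℂ (ker f) := by
  have hex := Module.Flat.lTensor_exact (R := ℂ) M (LinearMap.exact_subtype_ker_map f)
  have h1 : ker (lTensor M f) = range (lTensor M (ker f).subtype) := LinearMap.exact_iff.mp hex
  have hinj : Function.Injective (lTensor M (ker f).subtype) :=
    Module.Flat.lTensor_preserves_injective_linearMap _ (Submodule.injective_subtype _)
  rw [h1, LinearMap.finrank_range_of_inj hinj, Module.finrank_tensorProduct]

private lemma aux_ker_sq (V₂ : Type*) [AddCommGroup V₂] [Module ℂ V₂] [FiniteDimensional ℂ V₂]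
    (T₂ : Module.End ℂ V₂) :
    finrank ℂ (ker (T₂ ∘ₗ T₂)) =
      finrank ℂ (ker T₂) + finrank ℂ (ker T₂ ⊓ range T₂ : Submodule ℂ V₂) := by
  set q : ↥(ker (T₂ ∘ₗ T₂)) →ₗ[ℂ] V₂ := T₂ ∘ₗ (ker (T₂ ∘ₗ T₂)).subtype with hq
  have hle : ker T₂ ≤ ker (T₂ ∘ₗ T₂) := by
    intro x hx
    simp only [mem_ker, comp_apply] at hx ⊢
    rw [hx, map_zero]
  have h1 : range q = ker T₂ ⊓ range T₂ := by
    ext y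
    constructor
    · rintro ⟨⟨x, hx⟩, rfl⟩
      simp only [mem_ker, comp_apply] at hx
      exact ⟨by simpa [q] using hx, ⟨x, by simp [q]⟩⟩
    · rintro ⟨hy1, x, rfl⟩
      refine ⟨⟨x, ?_⟩, by simp [q]⟩
      simpa [mem_ker, comp_apply] using hy1
  have h2 : finrank ℂ (ker q) = finrank ℂ (ker T₂) := by
    have : ker q = Submodule.comap (ker (T₂ ∘ₗ T₂)).subtype (ker T₂) :=
      LinearMap.ker_comp _ _
    rw [this]
    exact (Submodule.comapSubtypeEquivOfLe hle).finrank_eq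
  have h4 := q.finrank_range_add_finrank_ker
  rw [h1, h2] at h4
  omega



private lemma aux_comm {V₂ : Type*} [AddCommGroup V₂] [Module ℂ V₂] (T₂ : Module.End ℂ V₂)
    {W W' : Type*} [AddCommGroup W] [Module ℂ W] [AddCommGroup W'] [Module ℂ W']
    (f : W →ₗ[ℂ] W') (v : TensorProduct ℂ W V₂) :
    LinearMap.lTensor W' T₂ (LinearMap.rTensor V₂ f v)
      = LinearMap.rTensor V₂ f (LinearMap.lTensor W T₂ v) := by
  rw [← LinearMap.comp_apply, ← LinearMap.comp_apply, LinearMap.lTensor_comp_rTensor,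
    LinearMap.rTensor_comp_lTensor]

private lemma aux_proj0 {V₁ V₂ : Type*} [AddCommGroup V₁] [Module ℂ V₁]
    [AddCommGroup V₂] [Module ℂ V₂]
    {W W' : Type*} [AddCommGroup W] [Module ℂ W] [AddCommGroup W'] [Module ℂ W']
    (f : W →ₗ[ℂ] V₁) (g : V₁ →ₗ[ℂ] W') (h : g ∘ₗ f = 0) (v : TensorProduct ℂ W V₂) :
    LinearMap.rTensor V₂ g (LinearMap.rTensor V₂ f v) = 0 := by
  rw [← LinearMap.comp_apply, ← LinearMap.rTensor_comp, h, LinearMap.rTensor_zero,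
    LinearMap.zero_apply]

set_option maxHeartbeats 800000 in
private lemma aux_core (V₁ V₂ X Y Z : Type*)
    [AddCommGroup V₁] [Module ℂ V₁] [FiniteDimensional ℂ V₁]
    [AddCommGroup V₂] [Module ℂ V₂] [FiniteDimensional ℂ V₂]
    [AddCommGroup X] [Module ℂ X] [FiniteDimensional ℂ X]
    [AddCommGroup Y] [Module ℂ Y] [FiniteDimensional ℂ Y]
    [AddCommGroup Z] [Module ℂ Z]
    (T₁ : Module.End ℂ V₁) (T₂ : Module.End ℂ V₂)
    (ιX : X →ₗ[ℂ] V₁) (ιY : Y →ₗ[ℂ] V₁) (ιZ : Z →ₗ[ℂ] V₁)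
    (pX : V₁ →ₗ[ℂ] X) (pY : V₁ →ₗ[ℂ] Y) (pZ : V₁ →ₗ[ℂ] Z)
    (u : Z ≃ₗ[ℂ] X)
    (hid : ιX ∘ₗ pX + ιY ∘ₗ pY + ιZ ∘ₗ pZ = LinearMap.id)
    (hXX : pX ∘ₗ ιX = LinearMap.id) (hYY : pY ∘ₗ ιY = LinearMap.id)
    (hZZ : pZ ∘ₗ ιZ = LinearMap.id)
    (hXY : pX ∘ₗ ιY = 0) (hXZ : pX ∘ₗ ιZ = 0)
    (hYX : pY ∘ₗ ιX = 0) (hYZ : pY ∘ₗ ιZ = 0)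
    (hZX : pZ ∘ₗ ιX = 0) (hZY : pZ ∘ₗ ιY = 0)
    (hT₁ : T₁ = ιX ∘ₗ (u : Z →ₗ[ℂ] X) ∘ₗ pZ) :
    finrank ℂ (ker (rTensor V₂ T₁ + lTensor V₁ T₂)) =
      finrank ℂ (ker (lTensor Y T₂)) + finrank ℂ (ker (lTensor X (T₂ ∘ₗ T₂))) := by
  set u' : Z →ₗ[ℂ] X := (u : Z →ₗ[ℂ] X) with hu'
  set w' : X →ₗ[ℂ] Z := (u.symm : X →ₗ[ℂ] Z) with hw'
  have huw : u' ∘ₗ w' = LinearMap.id := by ext x; simp [u', w']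
  have hwu : w' ∘ₗ u' = LinearMap.id := by ext x; simp [u', w']
  set S : Module.End ℂ (V₁ ⊗[ℂ] V₂) := rTensor V₂ T₁ + lTensor V₁ T₂ with hS
  set A : Submodule ℂ (Y ⊗[ℂ] V₂) := ker (lTensor Y T₂) with hA
  set B : Submodule ℂ (X ⊗[ℂ] V₂) := ker (lTensor X (T₂ ∘ₗ T₂)) with hB
  have c1 : ∀ v, rTensor V₂ T₁ (rTensor V₂ ιY v) = 0 := by
    intro v
    rw [← comp_apply, ← rTensor_comp, hT₁, comp_assoc, comp_assoc, hZY, comp_zero, comp_zero,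
      rTensor_zero, LinearMap.zero_apply]
  have c2 : ∀ v, rTensor V₂ T₁ (rTensor V₂ ιX v) = 0 := by
    intro v
    rw [← comp_apply, ← rTensor_comp, hT₁, comp_assoc, comp_assoc, hZX, comp_zero, comp_zero,
      rTensor_zero, LinearMap.zero_apply]
  have c3 : ∀ v, rTensor V₂ T₁ (rTensor V₂ (ιZ ∘ₗ w') v) = rTensor V₂ ιX v := by
    intro v
    rw [← comp_apply, ← rTensor_comp, hT₁]
    congr 1
    have h : (ιX ∘ₗ u' ∘ₗ pZ) ∘ₗ ιZ ∘ₗ w' = ιX ∘ₗ (u' ∘ₗ ((pZ ∘ₗ ιZ) ∘ₗ w')) := by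
      simp only [comp_assoc]
    rw [h, hZZ, id_comp, huw, comp_id]
  have cT : ∀ v, rTensor V₂ T₁ v = rTensor V₂ ιX (rTensor V₂ u' (rTensor V₂ pZ v)) := by
    intro v
    conv_lhs => rw [hT₁]
    rw [← comp_apply, ← comp_apply, ← rTensor_comp, ← rTensor_comp, comp_assoc]
  have projYY : ∀ v, rTensor V₂ pY (rTensor V₂ ιY v) = v := by
    intro v; rw [← comp_apply, ← rTensor_comp, hYY, rTensor_id, id_apply]
  have projXX : ∀ v, rTensor V₂ pX (rTensor V₂ ιX v) = v := by
    intro v; rw [← comp_apply, ← rTensor_comp, hXX, rTensor_id, id_apply]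
  have hsum : ∀ v : V₁ ⊗[ℂ] V₂,
      rTensor V₂ ιX (rTensor V₂ pX v) + rTensor V₂ ιY (rTensor V₂ pY v)
        + rTensor V₂ ιZ (rTensor V₂ pZ v) = v := by
    intro v
    have h : rTensor V₂ (ιX ∘ₗ pX) v + rTensor V₂ (ιY ∘ₗ pY) v + rTensor V₂ (ιZ ∘ₗ pZ) v = v := by
      rw [← LinearMap.add_apply, ← LinearMap.add_apply, ← rTensor_add, ← rTensor_add, hid, rTensor_id, id_apply]
    simpa only [rTensor_comp, comp_apply] using h
  -- the map G₀
  set g₁ : ↥A →ₗ[ℂ] V₁ ⊗[ℂ] V₂ := rTensor V₂ ιY ∘ₗ A.subtype with hg₁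
  set g₂ : ↥B →ₗ[ℂ] V₁ ⊗[ℂ] V₂ :=
    rTensor V₂ ιX ∘ₗ B.subtype
      - (rTensor V₂ (ιZ ∘ₗ w') ∘ₗ lTensor X T₂) ∘ₗ B.subtype with hg₂
  set G₀ : ↥A × ↥B →ₗ[ℂ] V₁ ⊗[ℂ] V₂ := LinearMap.coprod g₁ g₂ with hG₀
  have G₀_apply : ∀ (j : ↥A) (a : ↥B),
      G₀ (j, a) = rTensor V₂ ιY ↑j + (rTensor V₂ ιX ↑a
        - rTensor V₂ (ιZ ∘ₗ w') (lTensor X T₂ ↑a)) := by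
    intro j a
    rw [hG₀, coprod_apply, hg₁, hg₂]
    simp only [comp_apply, LinearMap.sub_apply, Submodule.coe_subtype]
  have memA : ∀ j : ↥A, lTensor Y T₂ (↑j : Y ⊗[ℂ] V₂) = 0 := fun j => j.2
  have memB : ∀ a : ↥B, lTensor X T₂ (lTensor X T₂ (↑a : X ⊗[ℂ] V₂)) = 0 := by
    intro a
    have h : lTensor X (T₂ ∘ₗ T₂) (↑a : X ⊗[ℂ] V₂) = 0 := a.2
    rw [lTensor_comp, comp_apply] at h
    exact h
  have hmem : ∀ p : ↥A × ↥B, S (G₀ p) = 0 := by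
    rintro ⟨j, a⟩
    rw [G₀_apply, hS]
    simp only [LinearMap.add_apply, map_add, map_sub]
    rw [c1, c2, c3, aux_comm T₂ ιY, aux_comm T₂ ιX, aux_comm T₂ (ιZ ∘ₗ w'), memA, memB]
    simp only [map_zero]
    abel
  set G : ↥A × ↥B →ₗ[ℂ] ↥(ker S) := G₀.codRestrict (ker S) hmem with hG
  have Ginj : Function.Injective G := by
    rintro ⟨j, a⟩ ⟨j', a'⟩ h
    have h0 : G₀ (j, a) = G₀ (j', a') := congrArg Subtype.val h
    rw [G₀_apply, G₀_apply] at h0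
    have hpXZ : pX ∘ₗ ιZ ∘ₗ w' = 0 := by rw [← comp_assoc, hXZ, zero_comp]
    have hpYZ : pY ∘ₗ ιZ ∘ₗ w' = 0 := by rw [← comp_assoc, hYZ, zero_comp]
    have hX0 : (↑a : X ⊗[ℂ] V₂) = ↑a' := by
      have h1 := congrArg (rTensor V₂ pX) h0
      simpa only [map_add, map_sub, projXX, aux_proj0 ιY pX hXY,
        aux_proj0 (ιZ ∘ₗ w') pX hpXZ, zero_add, add_zero, sub_zero] using h1
    have hY0 : (↑j : Y ⊗[ℂ] V₂) = ↑j' := by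
      have h1 := congrArg (rTensor V₂ pY) h0
      simpa only [map_add, map_sub, projYY, aux_proj0 ιX pY hYX,
        aux_proj0 (ιZ ∘ₗ w') pY hpYZ, zero_add, add_zero, sub_zero] using h1
    exact Prod.ext (Subtype.ext hY0) (Subtype.ext hX0)
  have Gsurj : Function.Surjective G := by
    rintro ⟨x, hx⟩
    rw [mem_ker, hS, LinearMap.add_apply] at hx
    have hTx : rTensor V₂ T₁ x
        = rTensor V₂ ιX (rTensor V₂ u' (rTensor V₂ pZ x)) := cT x
    have hj : rTensor V₂ pY x ∈ A := by
      rw [hA, mem_ker]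
      have h1 := congrArg (rTensor V₂ pY) hx
      rw [map_add, map_zero, hTx, aux_proj0 ιX pY hYX, zero_add, ← aux_comm T₂ pY x] at h1
      exact h1
    have hc : lTensor Z T₂ (rTensor V₂ pZ x) = 0 := by
      have h1 := congrArg (rTensor V₂ pZ) hx
      rw [map_add, map_zero, hTx, aux_proj0 ιX pZ hZX, zero_add, ← aux_comm T₂ pZ x] at h1
      exact h1
    have h3 : rTensor V₂ u' (rTensor V₂ pZ x) + lTensor X T₂ (rTensor V₂ pX x) = 0 := by
      have h1 := congrArg (rTensor V₂ pX) hx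
      rw [map_add, map_zero, hTx, projXX, ← aux_comm T₂ pX x] at h1
      exact h1
    have h4 : lTensor X T₂ (rTensor V₂ pX x)
        = - rTensor V₂ u' (rTensor V₂ pZ x) := by
      rw [eq_neg_iff_add_eq_zero, add_comm]; exact h3
    have ha : rTensor V₂ pX x ∈ B := by
      rw [hB, mem_ker, lTensor_comp, comp_apply, h4, map_neg, aux_comm T₂ u', hc, map_zero, neg_zero]
    refine ⟨(⟨rTensor V₂ pY x, hj⟩, ⟨rTensor V₂ pX x, ha⟩), Subtype.ext ?_⟩
    show G₀ (⟨rTensor V₂ pY x, hj⟩, ⟨rTensor V₂ pX x, ha⟩) = x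
    rw [G₀_apply]
    simp only
    rw [h4, map_neg, sub_neg_eq_add]
    have h5 : rTensor V₂ (ιZ ∘ₗ w') (rTensor V₂ u' (rTensor V₂ pZ x))
        = rTensor V₂ ιZ (rTensor V₂ pZ x) := by
      rw [← comp_apply, ← rTensor_comp (M := V₂)]
      congr 1
      rw [comp_assoc, hwu, comp_id]
    rw [h5]
    conv_rhs => rw [← hsum x]
    abel
  have e : (↥A × ↥B) ≃ₗ[ℂ] ↥(ker S) := LinearEquiv.ofBijective G ⟨Ginj, Gsurj⟩
  rw [← e.finrank_eq, Module.finrank_prod]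



private lemma aux_main (V₁ V₂ : Type*)
    [AddCommGroup V₁] [Module ℂ V₁] [FiniteDimensional ℂ V₁]
    [AddCommGroup V₂] [Module ℂ V₂] [FiniteDimensional ℂ V₂]
    (T₁ : Module.End ℂ V₁) (T₂ : Module.End ℂ V₂)
    (hsq : LinearMap.range T₁ ≤ LinearMap.ker T₁) :
    finrank ℂ (ker (rTensor V₂ T₁ + lTensor V₁ T₂)) =
      finrank ℂ (ker T₁) * finrank ℂ (ker T₂)
        + finrank ℂ (LinearMap.range T₁) *
            finrank ℂ (ker T₂ ⊓ LinearMap.range T₂ : Submodule ℂ V₂) := by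
  obtain ⟨C, hC⟩ := Submodule.exists_isCompl (LinearMap.ker T₁)
  set K : Submodule ℂ V₁ := LinearMap.ker T₁ with hK
  set I : Submodule ℂ ↥K := Submodule.comap K.subtype (LinearMap.range T₁) with hI
  obtain ⟨J, hJ⟩ := Submodule.exists_isCompl I
  set pK : V₁ →ₗ[ℂ] ↥K := K.projectionOnto C hC with hpK
  set pC : V₁ →ₗ[ℂ] ↥C := C.projectionOnto K hC.symm with hpC
  have hdec : ∀ v : V₁, ((pK v : V₁) + (pC v : V₁)) = v :=
    Submodule.projection_add_projection_eq_self hC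
  -- u : C ≃ I
  set u₀ : ↥C →ₗ[ℂ] ↥K := (T₁ ∘ₗ C.subtype).codRestrict K (fun c => hsq ⟨c, rfl⟩) with hu₀
  set u₁ : ↥C →ₗ[ℂ] ↥I := u₀.codRestrict I (fun c => by
    simp only [hI, Submodule.mem_comap]
    exact ⟨(c : V₁), rfl⟩) with hu₁
  have u₁_coe : ∀ c : ↥C, ((u₁ c : ↥K) : V₁) = T₁ (c : V₁) := by
    intro c; simp [hu₁, hu₀]
  have hTv : ∀ v : V₁, T₁ v = T₁ (pC v : V₁) := by
    intro v
    conv_lhs => rw [← hdec v]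
    rw [map_add, mem_ker.mp (pK v).2, zero_add]
  have u₁inj : Function.Injective u₁ := by
    intro c c' h
    have h1 : T₁ ((c : V₁) - (c' : V₁)) = 0 := by
      rw [map_sub, ← u₁_coe, ← u₁_coe, h, sub_self]
    have h4 : (c : V₁) - (c' : V₁) = 0 :=
      (Submodule.disjoint_def.mp hC.disjoint) _ (mem_ker.mpr h1) (sub_mem c.2 c'.2)
    exact Subtype.ext (sub_eq_zero.mp h4)
  have u₁surj : Function.Surjective u₁ := by
    intro x
    obtain ⟨v, hv⟩ := Submodule.mem_comap.mp x.2
    refine ⟨pC v, Subtype.ext (Subtype.ext ?_)⟩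
    rw [u₁_coe, ← hTv v]
    exact hv
  set u : ↥C ≃ₗ[ℂ] ↥I := LinearEquiv.ofBijective u₁ ⟨u₁inj, u₁surj⟩ with hu
  -- inclusions and projections
  set ιX : ↥I →ₗ[ℂ] V₁ := K.subtype ∘ₗ I.subtype with hιX
  set ιY : ↥J →ₗ[ℂ] V₁ := K.subtype ∘ₗ J.subtype with hιY
  set pX : V₁ →ₗ[ℂ] ↥I := I.projectionOnto J hJ ∘ₗ pK with hpX
  set pY : V₁ →ₗ[ℂ] ↥J := J.projectionOnto I hJ.symm ∘ₗ pK with hpY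
  have hid : ιX ∘ₗ pX + ιY ∘ₗ pY + C.subtype ∘ₗ pC = LinearMap.id := by
    ext v
    simp only [LinearMap.add_apply, comp_apply, id_apply, hιX, hιY, hpX, hpY, Submodule.coe_subtype]
    have hy := congrArg K.subtype (show ((I.projectionOnto J hJ (pK v) : ↥K) + (J.projectionOnto I hJ.symm (pK v) : ↥K)) = pK v from Submodule.projection_add_projection_eq_self hJ (pK v))
    rw [map_add] at hy
    simp only [Submodule.coe_subtype] at hy
    rw [hy]
    exact hdec v
  have hXX : pX ∘ₗ ιX = LinearMap.id := by
    ext x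
    simp [hpX, hιX, hpK, Submodule.linearProjOfIsCompl_apply_left,
      Submodule.linearProjOfIsCompl_apply_left hC]
  have hYY : pY ∘ₗ ιY = LinearMap.id := by
    ext x
    simp [hpY, hιY, hpK, Submodule.linearProjOfIsCompl_apply_left hC]
  have hZZ : pC ∘ₗ C.subtype = LinearMap.id := by
    ext x
    simp [hpC, Submodule.linearProjOfIsCompl_apply_left hC.symm]
  have hXY : pX ∘ₗ ιY = 0 := by
    ext x
    simp [hpX, hιY, hpK, Submodule.linearProjOfIsCompl_apply_left hC,
      Submodule.linearProjOfIsCompl_apply_right]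
  have hXZ : pX ∘ₗ C.subtype = 0 := by
    ext x
    simp [hpX, hpK, Submodule.linearProjOfIsCompl_apply_right]
  have hYX : pY ∘ₗ ιX = 0 := by
    ext x
    simp [hpY, hιX, hpK, Submodule.linearProjOfIsCompl_apply_left hC,
      Submodule.linearProjOfIsCompl_apply_right]
  have hYZ : pY ∘ₗ C.subtype = 0 := by
    ext x
    simp [hpY, hpK, Submodule.linearProjOfIsCompl_apply_right]
  have hZX : pC ∘ₗ ιX = 0 := by
    ext x
    simp [hpC, hιX, Submodule.linearProjOfIsCompl_apply_right]
  have hZY : pC ∘ₗ ιY = 0 := by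
    ext x
    simp [hpC, hιY, Submodule.linearProjOfIsCompl_apply_right]
  have hT₁ : T₁ = ιX ∘ₗ (u : ↥C →ₗ[ℂ] ↥I) ∘ₗ pC := by
    ext v
    simp only [comp_apply, hιX, Submodule.coe_subtype, hu, LinearEquiv.coe_coe, LinearEquiv.ofBijective_apply]
    exact (hTv v).trans (u₁_coe (pC v)).symm
  -- dimension facts
  have hfI : finrank ℂ ↥I = finrank ℂ ↥(LinearMap.range T₁) :=
    (Submodule.comapSubtypeEquivOfLe hsq).finrank_eq
  have hfIJ : finrank ℂ ↥I + finrank ℂ ↥J = finrank ℂ ↥K :=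
    Submodule.finrank_add_eq_of_isCompl hJ
  rw [aux_core V₁ V₂ ↥I ↥J ↥C T₁ T₂ ιX ιY C.subtype pX pY pC u hid hXX hYY hZZ hXY hXZ hYX hYZ
      hZX hZY hT₁, aux_ker_lTensor ↥J V₂ T₂, aux_ker_lTensor ↥I V₂ (T₂ ∘ₗ T₂), aux_ker_sq V₂ T₂,
    show finrank ℂ ↥K = finrank ℂ ↥I + finrank ℂ ↥J from hfIJ.symm, ← hfI]
  ring


/-- Abstract form of Corollary 2.5: for nilpotent endomorphisms `T₁`, `T₂` of
finite-dimensional complex vector spaces with `im T₁ ⊆ ker T₁` (i.e. `T₁² = 0`), and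
`T = T₁ ⊗ id + id ⊗ T₂`, we have `dim coker T = τ₁τ₂ + ν₁ν₂` where
`τᵢ = dim coker Tᵢ` and `νᵢ = dim (ker Tᵢ ⊓ im Tᵢ)`. -/
theorem stmt_13 (V₁ V₂ : Type*) [AddCommGroup V₁] [Module ℂ V₁] [FiniteDimensional ℂ V₁]
    [AddCommGroup V₂] [Module ℂ V₂] [FiniteDimensional ℂ V₂]
    (T₁ : Module.End ℂ V₁) (T₂ : Module.End ℂ V₂)
    (h₁ : IsNilpotent T₁) (h₂ : IsNilpotent T₂)
    (hsq : LinearMap.range T₁ ≤ LinearMap.ker T₁)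
    (T : Module.End ℂ (TensorProduct ℂ V₁ V₂))
    (hT : T = LinearMap.rTensor V₂ T₁ + LinearMap.lTensor V₁ T₂) :
    Module.finrank ℂ (TensorProduct ℂ V₁ V₂ ⧸ LinearMap.range T)
      = Module.finrank ℂ (V₁ ⧸ LinearMap.range T₁) *
          Module.finrank ℂ (V₂ ⧸ LinearMap.range T₂)
        + Module.finrank ℂ (LinearMap.ker T₁ ⊓ LinearMap.range T₁ : Submodule ℂ V₁) *
            Module.finrank ℂ (LinearMap.ker T₂ ⊓ LinearMap.range T₂ : Submodule ℂ V₂) := by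
  have e1 : finrank ℂ (TensorProduct ℂ V₁ V₂ ⧸ LinearMap.range T) = finrank ℂ (ker T) := by
    have a1 := Submodule.finrank_quotient_add_finrank (LinearMap.range T)
    have a2 := LinearMap.finrank_range_add_finrank_ker T
    omega
  have e2 : finrank ℂ (V₁ ⧸ LinearMap.range T₁) = finrank ℂ (ker T₁) := by
    have a1 := Submodule.finrank_quotient_add_finrank (LinearMap.range T₁)
    have a2 := LinearMap.finrank_range_add_finrank_ker T₁
    omega
  have e3 : finrank ℂ (V₂ ⧸ LinearMap.range T₂) = finrank ℂ (ker T₂) := by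
    have a1 := Submodule.finrank_quotient_add_finrank (LinearMap.range T₂)
    have a2 := LinearMap.finrank_range_add_finrank_ker T₂
    omega
  have e4 : LinearMap.ker T₁ ⊓ LinearMap.range T₁ = LinearMap.range T₁ := inf_eq_right.mpr hsq
  rw [e1, e2, e3, e4, hT]
  exact aux_main V₁ V₂ T₁ T₂ hsq
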